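/- arXiv:1310.0209 — 2 statements merged into one kernel-verified Lean document; each statement's English description precedes it below -/
import Mathlib

section
/- Let α ∈ (0,1), ν, γ > 0, and u₀ > 0. Set μ = ν·Γ(1−α)·Γ(1+α)·u₀^γ, ε = (u₀·Γ(1+α)/(2μ))^{1/α}, C = ε^{α/γ}·u₀/2, and define v(t) = u₀ − μ·t^α/Γ(1+α) for t ∈ [0,ε] and v(t) = C·t^{−α/γ} for t ≥ ε. Then v ∈ H¹_{1,loc}(ℝ₊), v(0) = u₀, v is nonincreasing and strictly positive on [0,∞), and v is a subsolution of the fractional differential equation ∂_t^α(u−u₀) + ν·u^γ = 0, i.e. (g_{1−α}⋆v̇)(t) + ν·v(t)^γ ≤ 0 for a.a. t > 0. -/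
open MeasureTheory Set Real

/-- Convolution on the positive half-line: `(f ⋆ g)(t) = ∫₀ᵗ f(t-τ) g(τ) dτ`. -/
noncomputable def conv (f g : ℝ → ℝ) (t : ℝ) : ℝ :=
  ∫ τ in (0:ℝ)..t, f (t - τ) * g τ

/-- The standard kernel `g_β(t) = t^{β-1}/Γ(β)`. -/
noncomputable def gker (β t : ℝ) : ℝ := t ^ (β - 1) / Real.Gamma β

/-- The explicit function `v` (piecewise `u₀ - μ g_{1+α}(t)` and `C t^{-α/γ}`) is a
locally absolutely continuous, nonincreasing, strictly positive subsolution of the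
fractional ODE `∂ₜ^α(u - u₀) + ν u^γ = 0`, i.e. `(g_{1-α} ⋆ v̇)(t) + ν v(t)^γ ≤ 0`
for a.a. `t > 0`. -/
theorem fractional_ode_subsolution
    (α ν γ u₀ : ℝ) (hα0 : 0 < α) (hα1 : α < 1) (hν : 0 < ν) (hγ : 0 < γ)
    (hu₀ : 0 < u₀)
    (μ ε C : ℝ)
    (hμ : μ = ν * Real.Gamma (1 - α) * Real.Gamma (1 + α) * u₀ ^ γ)
    (hε : ε = (u₀ * Real.Gamma (1 + α) / (2 * μ)) ^ (1 / α))
    (hC : C = ε ^ (α / γ) * u₀ / 2)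
    (v : ℝ → ℝ)
    (hv : v = fun t => if t ≤ ε then u₀ - μ * t ^ α / Real.Gamma (1 + α)
      else C * t ^ (-(α / γ))) :
    v 0 = u₀ ∧ AntitoneOn v (Ici 0) ∧ (∀ t, 0 ≤ t → 0 < v t) ∧
    ∃ v' : ℝ → ℝ,
      (∀ T, 0 < T → IntegrableOn v' (Icc 0 T)) ∧
      (∀ t, 0 ≤ t → v t = u₀ + ∫ τ in (0:ℝ)..t, v' τ) ∧
      (∀ᵐ t ∂(volume.restrict (Ioi (0:ℝ))),
        conv (gker (1 - α)) v' t + ν * v t ^ γ ≤ 0) := by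
  have hΓp : 0 < Real.Gamma (1 + α) := Real.Gamma_pos_of_pos (by linarith)
  have hΓm : 0 < Real.Gamma (1 - α) := Real.Gamma_pos_of_pos (by linarith)
  have hμp : 0 < μ := by rw [hμ]; positivity
  have hbase : 0 < u₀ * Real.Gamma (1 + α) / (2 * μ) := by positivity
  have hεp : 0 < ε := by rw [hε]; positivity
  have hεα : ε ^ α = u₀ * Real.Gamma (1 + α) / (2 * μ) := by
    rw [hε, ← Real.rpow_mul hbase.le, one_div, inv_mul_cancel₀ hα0.ne', Real.rpow_one]
  have hμεα : μ * ε ^ α / Real.Gamma (1 + α) = u₀ / 2 := by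
    rw [hεα]; field_simp
  have hCp : 0 < C := by rw [hC]; positivity
  have hCε : C * ε ^ (-(α / γ)) = u₀ / 2 := by
    have h1 : ε ^ (α / γ) ≠ 0 := (Real.rpow_pos_of_pos hεp _).ne'
    rw [hC, Real.rpow_neg hεp.le]
    field_simp
  have hvdef : ∀ t : ℝ, v t = if t ≤ ε then u₀ - μ * t ^ α / Real.Gamma (1 + α)
      else C * t ^ (-(α / γ)) := fun t => by rw [hv]
  have hvle : ∀ t, t ≤ ε → v t = u₀ - μ * t ^ α / Real.Gamma (1 + α) := by
    intro t ht; rw [hvdef, if_pos ht]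
  have hv2 : ∀ t, ε ≤ t → v t = C * t ^ (-(α / γ)) := by
    intro t ht
    rcases eq_or_lt_of_le ht with h | h
    · rw [← h, hvle ε le_rfl, hCε]
      have : μ * ε ^ α / Real.Gamma (1 + α) = u₀ / 2 := hμεα
      linarith
    · rw [hvdef, if_neg (not_le.2 h)]
  have hv0 : v 0 = u₀ := by
    rw [hvle 0 hεp.le, Real.zero_rpow hα0.ne']
    ring
  -- positivity
  have hpos : ∀ t, 0 ≤ t → 0 < v t := by
    intro t ht
    by_cases h : t ≤ ε
    · rw [hvle t h]
      have h2 : μ * t ^ α / Real.Gamma (1 + α) ≤ u₀ / 2 := by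
        rw [← hμεα]
        have h3 : t ^ α ≤ ε ^ α := Real.rpow_le_rpow ht h hα0.le
        gcongr
      linarith
    · rw [hv2 t (not_le.1 h).le]
      have : 0 < t := hεp.trans (not_le.1 h)
      positivity
  have hvleu : ∀ t, 0 ≤ t → v t ≤ u₀ := by
    intro t ht
    by_cases h : t ≤ ε
    · rw [hvle t h]
      have : 0 ≤ μ * t ^ α / Real.Gamma (1 + α) :=
        div_nonneg (mul_nonneg hμp.le (Real.rpow_nonneg ht _)) hΓp.le
      linarith
    · calc v t ≤ v ε := by
            rw [hv2 t (not_le.1 h).le, hv2 ε le_rfl]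
            have := Real.rpow_le_rpow_of_nonpos hεp (not_le.1 h).le
              (neg_nonpos.2 (le_of_lt (div_pos hα0 hγ)))
            exact mul_le_mul_of_nonneg_left this hCp.le
        _ ≤ u₀ := by
            rw [hvle ε le_rfl]
            have : 0 ≤ μ * ε ^ α / Real.Gamma (1 + α) := by positivity
            linarith
  -- antitone
  have haux1 : AntitoneOn v (Icc 0 ε) := by
    intro s hs t ht hst
    rw [hvle s hs.2, hvle t ht.2]
    have h1 : s ^ α ≤ t ^ α := Real.rpow_le_rpow hs.1 hst hα0.le
    have : μ * s ^ α / Real.Gamma (1 + α) ≤ μ * t ^ α / Real.Gamma (1 + α) := by gcongr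
    linarith
  have haux2 : AntitoneOn v (Ici ε) := by
    intro s hs t ht hst
    rw [hv2 s hs, hv2 t ht]
    exact mul_le_mul_of_nonneg_left
      (Real.rpow_le_rpow_of_nonpos (hεp.trans_le hs) hst (neg_nonpos.2 (le_of_lt (div_pos hα0 hγ)))) hCp.le
  have hanti : AntitoneOn v (Ici 0) := by
    intro s hs t ht hst
    by_cases h1 : t ≤ ε
    · exact haux1 ⟨hs, hst.trans h1⟩ ⟨ht, h1⟩ hst
    · by_cases h2 : ε ≤ s
      · exact haux2 h2 (h2.trans hst) hst
      · calc v t ≤ v ε := haux2 (le_refl ε) (not_le.1 h1).le (not_le.1 h1).le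
          _ ≤ v s := haux1 ⟨hs, (not_le.1 h2).le⟩ ⟨hεp.le, le_rfl⟩ (not_le.1 h2).le
  refine ⟨hv0, hanti, hpos, ?_⟩
  set c1 : ℝ := μ * α / Real.Gamma (1 + α) with hc1
  set c2 : ℝ := C * (α / γ) with hc2
  have hc1p : 0 < c1 := by rw [hc1]; positivity
  have hc2p : 0 < c2 := by rw [hc2]; positivity
  set v' : ℝ → ℝ := fun τ => if τ ≤ ε then -c1 * τ ^ (α - 1) else -c2 * τ ^ (-(α / γ) - 1)
    with hv'
  have hv'branch1 : ∀ τ, τ ≤ ε → v' τ = -c1 * τ ^ (α - 1) := by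
    intro τ hτ; rw [hv']; simp only [if_pos hτ]
  have hv'branch2 : ∀ τ, ε < τ → v' τ = -c2 * τ ^ (-(α / γ) - 1) := by
    intro τ hτ; rw [hv']; simp only [if_neg (not_le.2 hτ)]
  have hv'nonpos : ∀ τ, 0 ≤ τ → v' τ ≤ 0 := by
    intro τ hτ
    rw [hv']
    dsimp only
    split
    · have : 0 ≤ c1 * τ ^ (α - 1) := mul_nonneg hc1p.le (Real.rpow_nonneg hτ _)
      linarith
    · have : 0 ≤ c2 * τ ^ (-(α / γ) - 1) := mul_nonneg hc2p.le (Real.rpow_nonneg hτ _)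
      linarith
  -- integrability of v'
  have hint1 : ∀ b, 0 ≤ b → b ≤ ε → IntervalIntegrable v' volume 0 b := by
    intro b hb hbε
    rw [intervalIntegrable_iff_integrableOn_Ioc_of_le hb]
    have h0 : IntervalIntegrable (fun τ : ℝ => -c1 * τ ^ (α - 1)) volume 0 b :=
      (intervalIntegral.intervalIntegrable_rpow' (by linarith)).const_mul _
    rw [intervalIntegrable_iff_integrableOn_Ioc_of_le hb] at h0
    exact h0.congr_fun (fun τ hτ => (hv'branch1 τ (hτ.2.trans hbε)).symm) measurableSet_Ioc
  have hint2 : ∀ a b, ε ≤ a → a ≤ b → IntervalIntegrable v' volume a b := by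
    intro a b ha hab
    rw [intervalIntegrable_iff_integrableOn_Ioc_of_le hab]
    have hcont : ContinuousOn (fun τ : ℝ => -c2 * τ ^ (-(α / γ) - 1)) (Icc a b) := by
      apply ContinuousOn.mul continuousOn_const
      apply ContinuousOn.rpow_const continuous_id.continuousOn
      intro x hx
      exact Or.inl (ne_of_gt (hεp.trans_le (ha.trans hx.1)))
    have h0 : IntegrableOn (fun τ : ℝ => -c2 * τ ^ (-(α / γ) - 1)) (Ioc a b) volume :=
      (hcont.integrableOn_Icc).mono_set Ioc_subset_Icc_self
    exact h0.congr_fun (fun τ hτ => (hv'branch2 τ (ha.trans_lt hτ.1)).symm) measurableSet_Ioc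
  have hv'int : ∀ b, 0 ≤ b → IntervalIntegrable v' volume 0 b := by
    intro b hb
    by_cases h : b ≤ ε
    · exact hint1 b hb h
    · exact (hint1 ε hεp.le le_rfl).trans (hint2 ε b le_rfl (not_le.1 h).le)
  -- FTC pieces
  have hI1 : ∀ b, 0 ≤ b → b ≤ ε →
      (∫ τ in (0:ℝ)..b, v' τ) = -(μ * b ^ α / Real.Gamma (1 + α)) := by
    intro b hb hbε
    have hEq : EqOn v' (fun τ : ℝ => -c1 * τ ^ (α - 1)) (uIcc 0 b) := by
      intro τ hτ
      rw [uIcc_of_le hb] at hτ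
      exact hv'branch1 τ (hτ.2.trans hbε)
    rw [intervalIntegral.integral_congr hEq, intervalIntegral.integral_const_mul,
      integral_rpow (Or.inl (by linarith : (-1:ℝ) < α - 1))]
    have hα' : α - 1 + 1 = α := by ring
    rw [hα', Real.zero_rpow hα0.ne', hc1]
    field_simp [hΓp.ne', hα0.ne']
    ring
  have hI2 : ∀ b, ε ≤ b →
      (∫ τ in ε..b, v' τ) = C * b ^ (-(α / γ)) - C * ε ^ (-(α / γ)) := by
    intro b hb
    have hEq : ∀ᵐ τ ∂(volume : Measure ℝ), τ ∈ uIoc ε b →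
        v' τ = -c2 * τ ^ (-(α / γ) - 1) := by
      filter_upwards with τ hτ
      rw [uIoc_of_le hb] at hτ
      exact hv'branch2 τ hτ.1
    rw [intervalIntegral.integral_congr_ae hEq, intervalIntegral.integral_const_mul,
      integral_rpow (Or.inr ⟨by
        intro h
        have : α / γ = 0 := by linarith
        exact (div_pos hα0 hγ).ne' this, by
        rw [uIcc_of_le hb]
        intro h
        exact absurd h.1 (not_le.2 hεp)⟩)]
    have he : -(α / γ) - 1 + 1 = -(α / γ) := by ring
    rw [he, hc2]
    have hαγ : α / γ ≠ 0 := (div_pos hα0 hγ).ne'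
    field_simp [hαγ]
  have hftc : ∀ t, 0 ≤ t → v t = u₀ + ∫ τ in (0:ℝ)..t, v' τ := by
    intro t ht
    by_cases h : t ≤ ε
    · rw [hvle t h, hI1 t ht h]; ring
    · have hεt : ε ≤ t := (not_le.1 h).le
      rw [hv2 t hεt,
        ← intervalIntegral.integral_add_adjacent_intervals (hv'int ε hεp.le)
          (hint2 ε t le_rfl hεt),
        hI1 ε hεp.le le_rfl, hI2 t hεt]
      linarith [hμεα, hCε]
  -- gker facts
  have hgker : ∀ x : ℝ, gker (1 - α) x = x ^ (-α) / Real.Gamma (1 - α) := by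
    intro x
    have : (1:ℝ) - α - 1 = -α := by ring
    rw [gker, this]
  have hcore : c1 / Real.Gamma (1 - α) / α = ν * u₀ ^ γ := by
    rw [hc1, hμ]
    field_simp [hΓp.ne', hΓm.ne', hα0.ne']
  refine ⟨v', fun T hT => ?_, hftc, ?_⟩
  · rw [integrableOn_Icc_iff_integrableOn_Ioc]
    exact (hv'int T hT.le).1
  filter_upwards [ae_restrict_mem measurableSet_Ioi] with t ht
  rw [mem_Ioi] at ht
  by_cases hcase : t ≤ ε
  -- case 0 < t ≤ ε
  · have hconv : conv (gker (1 - α)) v' t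
        = -(c1 / Real.Gamma (1 - α)) * ∫ τ in (0:ℝ)..t, (t - τ) ^ (-α) * τ ^ (α - 1) := by
      rw [← intervalIntegral.integral_const_mul]
      apply intervalIntegral.integral_congr
      intro τ hτ
      rw [uIcc_of_le ht.le] at hτ
      dsimp only
      rw [hgker, hv'branch1 τ (hτ.2.trans hcase)]
      ring
    have hIf : IntervalIntegrable (fun τ => (t - τ) ^ (-α) * τ ^ (α - 1)) volume 0 t := by
      have h1 : IntervalIntegrable (fun τ => (t - τ) ^ (-α) * τ ^ (α - 1)) volume 0 (t / 2) := by
        apply IntervalIntegrable.continuousOn_mul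
          (intervalIntegral.intervalIntegrable_rpow' (by linarith : (-1:ℝ) < α - 1))
        apply ContinuousOn.rpow_const ((continuous_const.sub continuous_id).continuousOn)
        intro x hx
        rw [uIcc_of_le (by linarith : (0:ℝ) ≤ t / 2)] at hx
        exact Or.inl (sub_ne_zero_of_ne (lt_of_le_of_lt hx.2 (by linarith)).ne')
      have h2 : IntervalIntegrable (fun τ => (t - τ) ^ (-α) * τ ^ (α - 1)) volume (t / 2) t := by
        have hf2 : IntervalIntegrable (fun x => (t - x) ^ (-α)) volume (t / 2) t := by
          have h := (intervalIntegral.intervalIntegrable_rpow' (r := -α) (by linarith) (a := 0)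
            (b := t / 2)).comp_sub_left t
          rw [show t - t / 2 = t / 2 by ring, sub_zero] at h
          exact h.symm
        apply hf2.mul_continuousOn
        apply ContinuousOn.rpow_const continuous_id.continuousOn
        intro x hx
        rw [uIcc_of_le (by linarith : t / 2 ≤ t)] at hx
        exact Or.inl (lt_of_lt_of_le (by linarith) hx.1).ne'
      exact h1.trans h2
    have hIg : IntervalIntegrable (fun τ : ℝ => t ^ (-α) * τ ^ (α - 1)) volume 0 t :=
      (intervalIntegral.intervalIntegrable_rpow' (by linarith)).const_mul _
    have hne : ∀ᵐ τ ∂(volume.restrict (Icc (0:ℝ) t)), τ ≠ t := by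
      apply ae_restrict_of_ae
      rw [ae_iff]
      simp only [not_not]
      simpa using Real.volume_singleton (a := t)
    have hmono : (∫ τ in (0:ℝ)..t, t ^ (-α) * τ ^ (α - 1))
        ≤ ∫ τ in (0:ℝ)..t, (t - τ) ^ (-α) * τ ^ (α - 1) := by
      apply intervalIntegral.integral_mono_ae_restrict ht.le hIg hIf
      filter_upwards [ae_restrict_mem measurableSet_Icc, hne] with τ hτ hτt
      have h1 : 0 < t - τ := sub_pos.2 (lt_of_le_of_ne hτ.2 hτt)
      have h2 : t - τ ≤ t := by linarith [hτ.1]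
      exact mul_le_mul_of_nonneg_right
        (Real.rpow_le_rpow_of_nonpos h1 h2 (by linarith : -α ≤ 0))
        (Real.rpow_nonneg hτ.1 _)
    have hval : (∫ τ in (0:ℝ)..t, t ^ (-α) * τ ^ (α - 1)) = 1 / α := by
      rw [intervalIntegral.integral_const_mul,
        integral_rpow (Or.inl (by linarith : (-1:ℝ) < α - 1))]
      have hα' : α - 1 + 1 = α := by ring
      rw [hα', Real.zero_rpow hα0.ne', sub_zero, ← mul_div_assoc,
        ← Real.rpow_add ht, neg_add_cancel, Real.rpow_zero]
    have hconvle : conv (gker (1 - α)) v' t ≤ -(ν * u₀ ^ γ) := by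
      rw [hconv]
      have hcoef : -(c1 / Real.Gamma (1 - α)) ≤ 0 :=
        neg_nonpos_of_nonneg (div_nonneg hc1p.le hΓm.le)
      have := mul_le_mul_of_nonpos_left hmono hcoef
      calc -(c1 / Real.Gamma (1 - α)) * ∫ τ in (0:ℝ)..t, (t - τ) ^ (-α) * τ ^ (α - 1)
          ≤ -(c1 / Real.Gamma (1 - α)) * ∫ τ in (0:ℝ)..t, t ^ (-α) * τ ^ (α - 1) := this
        _ = -(c1 / Real.Gamma (1 - α)) * (1 / α) := by rw [hval]
        _ = -(ν * u₀ ^ γ) := by rw [← hcore]; field_simp [hα0.ne']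
    have hvγ : ν * v t ^ γ ≤ ν * u₀ ^ γ := by
      apply mul_le_mul_of_nonneg_left _ hν.le
      exact Real.rpow_le_rpow (hpos t ht.le).le (hvleu t ht.le) hγ.le
    linarith
  -- case ε < t
  · have hεt : ε < t := not_le.1 hcase
    have htp : 0 < t := hεp.trans hεt
    have hgcont : ContinuousOn (fun τ : ℝ => gker (1 - α) (t - τ)) (uIcc 0 ε) := by
      have : (fun τ : ℝ => gker (1 - α) (t - τ))
          = fun τ : ℝ => (t - τ) ^ (-α) * (Real.Gamma (1 - α))⁻¹ := by
        funext τ; rw [hgker]; ring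
      rw [this]
      refine ContinuousOn.mul ?_ continuousOn_const
      apply ContinuousOn.rpow_const ((continuous_const.sub continuous_id).continuousOn)
      intro x hx
      rw [uIcc_of_le hεp.le] at hx
      exact Or.inl (sub_ne_zero_of_ne (lt_of_le_of_lt hx.2 hεt).ne')
    have hi1 : IntervalIntegrable (fun τ => gker (1 - α) (t - τ) * v' τ) volume 0 ε :=
      (hv'int ε hεp.le).continuousOn_mul hgcont
    have hi2 : IntervalIntegrable (fun τ => gker (1 - α) (t - τ) * v' τ) volume ε t := by
      rw [intervalIntegrable_iff_integrableOn_Ioc_of_le hεt.le]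
      have hf2 : IntervalIntegrable (fun x => (t - x) ^ (-α)) volume ε t := by
        have h := (intervalIntegral.intervalIntegrable_rpow' (r := -α) (by linarith) (a := 0)
          (b := t - ε)).comp_sub_left t
        rw [show t - (t - ε) = ε by ring, sub_zero] at h
        exact h.symm
      have hcc : ContinuousOn (fun τ : ℝ => (Real.Gamma (1 - α))⁻¹ *
          (-c2 * τ ^ (-(α / γ) - 1))) (uIcc ε t) := by
        apply ContinuousOn.mul continuousOn_const
        apply ContinuousOn.mul continuousOn_const
        apply ContinuousOn.rpow_const continuous_id.continuousOn
        intro x hx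
        rw [uIcc_of_le hεt.le] at hx
        exact Or.inl (ne_of_gt (hεp.trans_le hx.1))
      have h0 : IntervalIntegrable (fun τ : ℝ => (t - τ) ^ (-α) *
          ((Real.Gamma (1 - α))⁻¹ * (-c2 * τ ^ (-(α / γ) - 1)))) volume ε t :=
        hf2.mul_continuousOn hcc
      rw [intervalIntegrable_iff_integrableOn_Ioc_of_le hεt.le] at h0
      apply h0.congr_fun _ measurableSet_Ioc
      intro τ hτ
      dsimp only
      rw [hgker, hv'branch2 τ hτ.1]
      ring
    have hB : (∫ τ in ε..t, gker (1 - α) (t - τ) * v' τ) ≤ 0 := by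
      rw [← neg_nonneg, ← intervalIntegral.integral_neg]
      apply intervalIntegral.integral_nonneg hεt.le
      intro u hu
      rw [neg_nonneg]
      apply mul_nonpos_of_nonneg_of_nonpos
      · rw [hgker]
        apply div_nonneg (Real.rpow_nonneg (by linarith [hu.2]) _) hΓm.le
      · exact hv'nonpos u (hεp.le.trans hu.1)
    have hA : (∫ τ in (0:ℝ)..ε, gker (1 - α) (t - τ) * v' τ)
        ≤ -(ν * u₀ ^ γ) * (ε ^ α * t ^ (-α)) := by
      have hconvA : (∫ τ in (0:ℝ)..ε, gker (1 - α) (t - τ) * v' τ)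
          = -(c1 / Real.Gamma (1 - α)) * ∫ τ in (0:ℝ)..ε, (t - τ) ^ (-α) * τ ^ (α - 1) := by
        rw [← intervalIntegral.integral_const_mul]
        apply intervalIntegral.integral_congr
        intro τ hτ
        rw [uIcc_of_le hεp.le] at hτ
        dsimp only
        rw [hgker, hv'branch1 τ hτ.2]
        ring
      have hIf : IntervalIntegrable (fun τ => (t - τ) ^ (-α) * τ ^ (α - 1)) volume 0 ε := by
        apply IntervalIntegrable.continuousOn_mul
          (intervalIntegral.intervalIntegrable_rpow' (by linarith : (-1:ℝ) < α - 1))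
        apply ContinuousOn.rpow_const ((continuous_const.sub continuous_id).continuousOn)
        intro x hx
        rw [uIcc_of_le hεp.le] at hx
        exact Or.inl (sub_ne_zero_of_ne (lt_of_le_of_lt hx.2 hεt).ne')
      have hIg : IntervalIntegrable (fun τ : ℝ => t ^ (-α) * τ ^ (α - 1)) volume 0 ε :=
        (intervalIntegral.intervalIntegrable_rpow' (by linarith)).const_mul _
      have hmono : (∫ τ in (0:ℝ)..ε, t ^ (-α) * τ ^ (α - 1))
          ≤ ∫ τ in (0:ℝ)..ε, (t - τ) ^ (-α) * τ ^ (α - 1) := by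
        apply intervalIntegral.integral_mono_on hεp.le hIg hIf
        intro τ hτ
        have h1 : 0 < t - τ := by linarith [hτ.2]
        have h2 : t - τ ≤ t := by linarith [hτ.1]
        exact mul_le_mul_of_nonneg_right
          (Real.rpow_le_rpow_of_nonpos h1 h2 (by linarith : -α ≤ 0))
          (Real.rpow_nonneg hτ.1 _)
      have hval : (∫ τ in (0:ℝ)..ε, t ^ (-α) * τ ^ (α - 1)) = t ^ (-α) * ε ^ α / α := by
        rw [intervalIntegral.integral_const_mul,
          integral_rpow (Or.inl (by linarith : (-1:ℝ) < α - 1))]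
        have hα' : α - 1 + 1 = α := by ring
        rw [hα', Real.zero_rpow hα0.ne', sub_zero, ← mul_div_assoc]
      rw [hconvA]
      calc -(c1 / Real.Gamma (1 - α)) * ∫ τ in (0:ℝ)..ε, (t - τ) ^ (-α) * τ ^ (α - 1)
          ≤ -(c1 / Real.Gamma (1 - α)) * ∫ τ in (0:ℝ)..ε, t ^ (-α) * τ ^ (α - 1) :=
            mul_le_mul_of_nonpos_left hmono
              (neg_nonpos_of_nonneg (div_nonneg hc1p.le hΓm.le))
        _ = -(c1 / Real.Gamma (1 - α) / α) * (ε ^ α * t ^ (-α)) := by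
            rw [hval]; ring
        _ = -(ν * u₀ ^ γ) * (ε ^ α * t ^ (-α)) := by rw [hcore]
    have hvγ : ν * v t ^ γ ≤ ν * u₀ ^ γ * (ε ^ α * t ^ (-α)) := by
      rw [hv2 t hεt.le]
      have hCt : (C * t ^ (-(α / γ))) ^ γ = C ^ γ * t ^ (-α) := by
        rw [Real.mul_rpow hCp.le (Real.rpow_nonneg htp.le _),
          ← Real.rpow_mul htp.le, show -(α / γ) * γ = -α by field_simp]
      have hCγ : C ^ γ ≤ ε ^ α * u₀ ^ γ := by
        have hCeq : C = ε ^ (α / γ) * (u₀ / 2) := by rw [hC]; ring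
        rw [hCeq, Real.mul_rpow (Real.rpow_nonneg hεp.le _) (by positivity),
          ← Real.rpow_mul hεp.le]
        have : α / γ * γ = α := by field_simp
        rw [this]
        have h2 : (u₀ / 2) ^ γ ≤ u₀ ^ γ :=
          Real.rpow_le_rpow (by positivity) (by linarith) hγ.le
        have h3 : 0 ≤ ε ^ α := Real.rpow_nonneg hεp.le _
        exact mul_le_mul_of_nonneg_left h2 h3
      rw [hCt]
      have h4 : 0 ≤ t ^ (-α) := Real.rpow_nonneg htp.le _
      calc ν * (C ^ γ * t ^ (-α)) ≤ ν * (ε ^ α * u₀ ^ γ * t ^ (-α)) := by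
            apply mul_le_mul_of_nonneg_left _ hν.le
            exact mul_le_mul_of_nonneg_right hCγ h4
        _ = ν * u₀ ^ γ * (ε ^ α * t ^ (-α)) := by ring
    have hsplit : conv (gker (1 - α)) v' t
        = (∫ τ in (0:ℝ)..ε, gker (1 - α) (t - τ) * v' τ)
          + ∫ τ in ε..t, gker (1 - α) (t - τ) * v' τ :=
      (intervalIntegral.integral_add_adjacent_intervals hi1 hi2).symm
    rw [hsplit]
    linarith
end

section
/- Let α ∈ (0,1), ν, γ > 0, and u₀ > 0. Define t₀ > 0 by t₀^α = (u₀^{1−γ}/ν)·(g_{1−α}(1/2) + (α/γ)·2^{α+α/γ}/Γ(2−α)), and define w(t) = u₀ for t ∈ [0,t₀] and w(t) = u₀·t₀^{α/γ}·t^{−α/γ} for t ≥ t₀. Then w ∈ H¹_{1,loc}(ℝ₊), w(0) = u₀, w is nonincreasing and strictly positive, and w is a supersolution of the fractional differential equation ∂_t^α(u−u₀) + ν·u^γ = 0, i.e. (g_{1−α}⋆ẇ)(t) + ν·w(t)^γ ≥ 0 for a.a. t > 0. -/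
open MeasureTheory Set Real

set_option maxHeartbeats 1000000 in
/-- The explicit function `w` (constant `u₀` on `[0,t₀]`, then `u₀ t₀^{α/γ} t^{-α/γ}`)
is a locally absolutely continuous, nonincreasing, strictly positive supersolution of
the fractional ODE `∂ₜ^α(u - u₀) + ν u^γ = 0`, i.e. `(g_{1-α} ⋆ ẇ)(t) + ν w(t)^γ ≥ 0`
for a.a. `t > 0`. -/
theorem fractional_ode_supersolution
    (α ν γ u₀ : ℝ) (hα0 : 0 < α) (hα1 : α < 1) (hν : 0 < ν) (hγ : 0 < γ)
    (hu₀ : 0 < u₀)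
    (t₀ : ℝ) (ht₀pos : 0 < t₀)
    (ht₀ : t₀ ^ α = (u₀ ^ (1 - γ) / ν) *
      (gker (1 - α) (1/2) + (α / γ) * 2 ^ (α + α / γ) / Real.Gamma (2 - α)))
    (w : ℝ → ℝ)
    (hw : w = fun t => if t ≤ t₀ then u₀ else u₀ * t₀ ^ (α / γ) * t ^ (-(α / γ))) :
    w 0 = u₀ ∧ AntitoneOn w (Ici 0) ∧ (∀ t, 0 ≤ t → 0 < w t) ∧
    ∃ w' : ℝ → ℝ,
      (∀ T, 0 < T → IntegrableOn w' (Icc 0 T)) ∧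
      (∀ t, 0 ≤ t → w t = u₀ + ∫ τ in (0:ℝ)..t, w' τ) ∧
      (∀ᵐ t ∂(volume.restrict (Ioi (0:ℝ))),
        0 ≤ conv (gker (1 - α)) w' t + ν * w t ^ γ) := by
  have hγ0 : γ ≠ 0 := ne_of_gt hγ
  set β : ℝ := α / γ with hβdef
  have hβ : 0 < β := div_pos hα0 hγ
  have hβγ : β * γ = α := div_mul_cancel₀ α hγ0
  set c : ℝ := u₀ * t₀ ^ β with hcdef
  have hcpos : 0 < c := mul_pos hu₀ (Real.rpow_pos_of_pos ht₀pos β)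
  set w' : ℝ → ℝ := fun τ => if τ ≤ t₀ then 0 else (-β * c) * τ ^ (-β - 1) with hw'def
  have hwle : ∀ t, t ≤ t₀ → w t = u₀ := fun t ht => by rw [hw]; simp [ht]
  have hwgt : ∀ t, t₀ < t → w t = c * t ^ (-β) := fun t ht => by
    rw [hw]; simp only [not_le.2 ht, if_false, hcdef]
  have hct₀ : c * t₀ ^ (-β) = u₀ := by
    rw [hcdef, mul_assoc, ← Real.rpow_add ht₀pos, add_neg_cancel, Real.rpow_zero, mul_one]
  -- w(0) = u₀
  have hw0 : w 0 = u₀ := hwle 0 ht₀pos.le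
  -- positivity
  have hwpos : ∀ t, 0 ≤ t → 0 < w t := by
    intro t ht
    rcases le_or_gt t t₀ with h | h
    · rw [hwle t h]; exact hu₀
    · rw [hwgt t h]
      exact mul_pos hcpos (Real.rpow_pos_of_pos (ht₀pos.trans h) _)
  -- antitone
  have hanti : AntitoneOn w (Ici 0) := by
    intro s hs t ht hst
    rcases le_or_gt t t₀ with h | h
    · rw [hwle t h, hwle s (hst.trans h)]
    · rw [hwgt t h]
      rcases le_or_gt s t₀ with h' | h'
      · rw [hwle s h']
        have h1 : t ^ (-β) ≤ t₀ ^ (-β) :=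
          Real.rpow_le_rpow_of_nonpos ht₀pos h.le (by linarith)
        calc c * t ^ (-β) ≤ c * t₀ ^ (-β) := by nlinarith
          _ = u₀ := hct₀
      · rw [hwgt s h']
        have h1 : t ^ (-β) ≤ s ^ (-β) :=
          Real.rpow_le_rpow_of_nonpos (ht₀pos.trans h') hst (by linarith)
        nlinarith
  -- measurability and boundedness of w'
  have hw'eq : w' = fun τ => if τ ≤ t₀ then 0
      else (-β * c) * Real.exp (Real.log τ * (-β - 1)) := by
    funext τ
    rw [hw'def]
    by_cases h : τ ≤ t₀
    · simp [h]
    · push_neg at h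
      simp only [if_neg (not_le.2 h)]
      rw [Real.rpow_def_of_pos (ht₀pos.trans h)]
  have hw'meas : Measurable w' := by
    rw [hw'eq]
    exact Measurable.ite measurableSet_Iic measurable_const
      (((Real.measurable_log.mul measurable_const).exp).const_mul _)
  set M : ℝ := β * c * t₀ ^ (-β - 1) with hMdef
  have hM : 0 < M := by
    have := Real.rpow_pos_of_pos ht₀pos (-β - 1); positivity
  have hw'bound : ∀ τ, ‖w' τ‖ ≤ M := by
    intro τ
    rw [hw'def]
    by_cases h : τ ≤ t₀
    · simp only [if_pos h, norm_zero]; exact hM.le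
    · push_neg at h
      have hτ : 0 < τ := ht₀pos.trans h
      have h1 : τ ^ (-β - 1) ≤ t₀ ^ (-β - 1) :=
        Real.rpow_le_rpow_of_nonpos ht₀pos h.le (by linarith)
      have h2 : (0:ℝ) ≤ τ ^ (-β - 1) := Real.rpow_nonneg hτ.le _
      simp only [if_neg (not_le.2 h)]
      rw [Real.norm_eq_abs, abs_mul, abs_of_nonneg h2, neg_mul, abs_neg,
        abs_of_nonneg (by positivity : (0:ℝ) ≤ β * c), hMdef]
      exact mul_le_mul_of_nonneg_left h1 (by positivity)
  have hw'int : ∀ a b : ℝ, IntervalIntegrable w' volume a b := by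
    intro a b
    rw [intervalIntegrable_iff]
    exact Measure.integrableOn_of_bounded (by rw [Set.uIoc]; exact measure_Ioc_lt_top.ne)
      hw'meas.aestronglyMeasurable (ae_of_all _ hw'bound)
  -- integrability on Icc 0 T
  have hIntOn : ∀ T : ℝ, 0 < T → IntegrableOn w' (Icc 0 T) := by
    intro T _
    exact Measure.integrableOn_of_bounded measure_Icc_lt_top.ne
      hw'meas.aestronglyMeasurable (ae_of_all _ hw'bound)
  -- vanishing integrals over intervals contained in (-∞, t₀]
  have hzero : ∀ a b : ℝ, a ≤ t₀ → b ≤ t₀ → ∫ τ in a..b, w' τ = 0 := by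
    intro a b ha hb
    rw [intervalIntegral.integral_congr (g := fun _ => (0:ℝ)), intervalIntegral.integral_zero]
    intro τ hτ
    have hτ' : τ ≤ t₀ := le_trans hτ.2 (max_le ha hb)
    simp [hw'def, hτ']
  -- FTC representation
  have hFTC : ∀ t, 0 ≤ t → w t = u₀ + ∫ τ in (0:ℝ)..t, w' τ := by
    intro t ht
    rcases le_or_gt t t₀ with h | h
    · rw [hwle t h, hzero 0 t ht₀pos.le h, add_zero]
    · rw [← intervalIntegral.integral_add_adjacent_intervals (hw'int 0 t₀) (hw'int t₀ t),
        hzero 0 t₀ ht₀pos.le le_rfl, zero_add]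
      have htpos : 0 < t := ht₀pos.trans h
      have heq : ∀ᵐ τ ∂volume, τ ∈ Set.uIoc t₀ t → w' τ = (-β * c) * τ ^ (-β - 1) := by
        refine ae_of_all _ (fun τ hτ => ?_)
        rw [Set.uIoc_of_le h.le] at hτ
        simp [hw'def, not_le.2 hτ.1]
      rw [intervalIntegral.integral_congr_ae heq, intervalIntegral.integral_const_mul,
        integral_rpow (Or.inr ⟨by intro hc; nlinarith [hβ],
          Set.notMem_uIcc_of_lt ht₀pos htpos⟩)]
      have key : (-β * c) * ((t ^ (-β - 1 + 1) - t₀ ^ (-β - 1 + 1)) / (-β - 1 + 1))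
          = c * t ^ (-β) - u₀ := by
        rw [show -β - 1 + 1 = -β by ring]
        have hβne : (-β : ℝ) ≠ 0 := neg_ne_zero.2 hβ.ne'
        field_simp
        have hct₀' := hct₀; rw [hcdef] at hct₀'; linear_combination (-1) * hct₀'
      rw [key, hwgt t h]
      ring
  -- Gamma facts
  have hΓ1 : 0 < Real.Gamma (1 - α) := Real.Gamma_pos_of_pos (by linarith)
  have hΓ2 : 0 < Real.Gamma (2 - α) := Real.Gamma_pos_of_pos (by linarith)
  have hΓ21 : Real.Gamma (2 - α) = (1 - α) * Real.Gamma (1 - α) := by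
    rw [show (2:ℝ) - α = (1 - α) + 1 by ring,
      Real.Gamma_add_one (by linarith : (0:ℝ) < 1 - α).ne']
  have hgk : ∀ x : ℝ, gker (1 - α) x = x ^ (-α) / Real.Gamma (1 - α) := by
    intro x; rw [gker, show (1:ℝ) - α - 1 = -α by ring]
  -- the main inequality, for every t
  have hmain : ∀ t : ℝ, 0 ≤ conv (gker (1 - α)) w' t + ν * w t ^ γ := by
    intro t
    rcases le_or_gt t t₀ with h | h
    · have hconv : conv (gker (1 - α)) w' t = 0 := by
        rw [show conv (gker (1 - α)) w' t
            = ∫ τ in (0:ℝ)..t, gker (1 - α) (t - τ) * w' τ from rfl]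
        rw [intervalIntegral.integral_congr (g := fun _ => (0:ℝ)), intervalIntegral.integral_zero]
        intro τ hτ
        have hτ' : τ ≤ t₀ := le_trans hτ.2 (max_le ht₀pos.le h)
        simp [hw'def, hτ']
      rw [hconv, hwle t h, zero_add]
      positivity
    · have htpos : 0 < t := ht₀pos.trans h
      have hhalf : 0 < t / 2 := by linarith
      have hrint : ∀ a b : ℝ, IntervalIntegrable (fun τ => (t - τ) ^ (-α)) volume a b := by
        intro a b
        have := (intervalIntegral.intervalIntegrable_rpow' (a := t - b) (b := t - a)
          (by linarith : (-1:ℝ) < -α)).comp_sub_left t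
        simpa using this.symm
      set F : ℝ → ℝ := fun τ => gker (1 - α) (t - τ) * w' τ with hFdef
      have hFint : ∀ a b : ℝ, IntervalIntegrable F volume a b := by
        intro a b
        have hg := (hrint a b).div_const (Real.Gamma (1 - α))
        rw [intervalIntegrable_iff] at hg ⊢
        have hb := hg.bdd_mul hw'meas.aestronglyMeasurable (ae_of_all _ hw'bound)
        exact hb.congr (ae_of_all _ fun τ => by simp only [hFdef, hgk]; ring)
      have hconv : conv (gker (1 - α)) w' t = ∫ τ in (0:ℝ)..t, F τ := rfl
      have h0 : ∫ τ in (0:ℝ)..t₀, F τ = 0 := by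
        rw [intervalIntegral.integral_congr (g := fun _ => (0:ℝ)), intervalIntegral.integral_zero]
        intro τ hτ
        have hτ' : τ ≤ t₀ := le_trans hτ.2 (max_le ht₀pos.le le_rfl)
        simp [hFdef, hw'def, hτ']
      set B₂ : ℝ := β * c * (t / 2) ^ (-β - 1) * ((t / 2) ^ (1 - α) / (1 - α)) /
        Real.Gamma (1 - α) with hB₂def
      have hB₂ : 0 ≤ B₂ := by
        rw [hB₂def]
        have h1 : (0:ℝ) ≤ (t/2) ^ (-β - 1) := Real.rpow_nonneg hhalf.le _
        have h2 : (0:ℝ) ≤ (t/2) ^ (1 - α) := Real.rpow_nonneg hhalf.le _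
        have h3 : (0:ℝ) < 1 - α := by linarith
        positivity
      -- tail estimate
      have htail : ∀ p : ℝ, t₀ ≤ p → t / 2 ≤ p → p < t → -B₂ ≤ ∫ τ in p..t, F τ := by
        intro p hp1 hp2 hp3
        set K : ℝ := β * c * (t / 2) ^ (-β - 1) with hKdef
        have hKnn : (0:ℝ) ≤ K := by
          rw [hKdef]
          have := Real.rpow_nonneg hhalf.le (-β - 1); positivity
        have hGle : ∀ τ ∈ Icc p t, (-K / Real.Gamma (1 - α)) * (t - τ) ^ (-α) ≤ F τ := by
          intro τ hτ
          have hA : (0:ℝ) ≤ (t - τ) ^ (-α) := Real.rpow_nonneg (by linarith [hτ.2]) _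
          have hw'ge : -K ≤ w' τ := by
            rw [hw'def]
            by_cases hc : τ ≤ t₀
            · simp only [if_pos hc]; linarith
            · push_neg at hc
              simp only [if_neg (not_le.2 hc)]
              have h1 : τ ^ (-β - 1) ≤ (t / 2) ^ (-β - 1) :=
                Real.rpow_le_rpow_of_nonpos hhalf (hp2.trans hτ.1) (by linarith)
              have h2 := mul_le_mul_of_nonneg_left h1 (by positivity : (0:ℝ) ≤ β * c)
              rw [hKdef]; nlinarith
          calc (-K / Real.Gamma (1 - α)) * (t - τ) ^ (-α)
              = ((t - τ) ^ (-α) / Real.Gamma (1 - α)) * (-K) := by ring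
            _ ≤ ((t - τ) ^ (-α) / Real.Gamma (1 - α)) * w' τ :=
                mul_le_mul_of_nonneg_left hw'ge (by positivity)
            _ = F τ := by simp only [hFdef, hgk]
        have hGint : IntervalIntegrable
            (fun τ => (-K / Real.Gamma (1 - α)) * (t - τ) ^ (-α)) volume p t :=
          (hrint p t).const_mul _
        have hmono := intervalIntegral.integral_mono_on hp3.le hGint (hFint p t) hGle
        refine le_trans ?_ hmono
        have hGval : ∫ τ in p..t, (-K / Real.Gamma (1 - α)) * (t - τ) ^ (-α)
            = (-K / Real.Gamma (1 - α)) * ((t - p) ^ (1 - α) / (1 - α)) := by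
          rw [intervalIntegral.integral_const_mul,
            intervalIntegral.integral_comp_sub_left (fun x => x ^ (-α)) t, sub_self,
            integral_rpow (Or.inl (by linarith)), Real.zero_rpow (by linarith : -α + 1 ≠ 0),
            show -α + 1 = 1 - α by ring]
          ring
        rw [hGval]
        have h1 : (t - p) ^ (1 - α) ≤ (t / 2) ^ (1 - α) :=
          Real.rpow_le_rpow (by linarith) (by linarith) (by linarith)
        have hD : (0:ℝ) ≤ K / (1 - α) / Real.Gamma (1 - α) := by
          have h3 : (0:ℝ) < 1 - α := by linarith
          positivity
        calc -B₂ = -(K / (1 - α) / Real.Gamma (1 - α) * (t / 2) ^ (1 - α)) := by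
              rw [hB₂def]; ring
          _ ≤ -(K / (1 - α) / Real.Gamma (1 - α) * (t - p) ^ (1 - α)) :=
              neg_le_neg (mul_le_mul_of_nonneg_left h1 hD)
          _ = (-K / Real.Gamma (1 - α)) * ((t - p) ^ (1 - α) / (1 - α)) := by ring
      -- middle estimate
      have hmid : t₀ < t / 2 →
          -(u₀ * (t / 2) ^ (-α) / Real.Gamma (1 - α)) ≤ ∫ τ in t₀..(t / 2), F τ := by
        intro hcase
        set K' : ℝ := β * c * (t / 2) ^ (-α) / Real.Gamma (1 - α) with hK'def
        have hK'nn : (0:ℝ) ≤ K' := by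
          rw [hK'def]
          have := Real.rpow_nonneg hhalf.le (-α); positivity
        have hGle : ∀ τ ∈ Icc t₀ (t / 2), -K' * τ ^ (-β - 1) ≤ F τ := by
          intro τ hτ
          have hτpos : 0 < τ := lt_of_lt_of_le ht₀pos hτ.1
          have hτnn : (0:ℝ) ≤ τ ^ (-β - 1) := Real.rpow_nonneg hτpos.le _
          have hAle : (t - τ) ^ (-α) ≤ (t / 2) ^ (-α) :=
            Real.rpow_le_rpow_of_nonpos hhalf (by linarith [hτ.2]) (by linarith)
          have hAnn : (0:ℝ) ≤ (t - τ) ^ (-α) :=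
            Real.rpow_nonneg (by linarith [hτ.2]) _
          by_cases hc : τ ≤ t₀
          · have hF0 : F τ = 0 := by simp [hFdef, hw'def, hc]
            rw [hF0]
            have : (0:ℝ) ≤ K' * τ ^ (-β - 1) := mul_nonneg hK'nn hτnn
            linarith
          · push_neg at hc
            have hF : F τ = ((t - τ) ^ (-α) / Real.Gamma (1 - α)) * (-β * c * τ ^ (-β - 1)) := by
              simp only [hFdef, hgk, hw'def, if_neg (not_le.2 hc)]
            rw [hF, hK'def]
            have hhint := mul_le_mul_of_nonneg_right
              (mul_le_mul_of_nonneg_right hAle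
                (by positivity : (0:ℝ) ≤ β * c / Real.Gamma (1 - α))) hτnn
            ring_nf at hhint ⊢
            linarith
        have hGint : IntervalIntegrable (fun τ => -K' * τ ^ (-β - 1)) volume t₀ (t / 2) :=
          (intervalIntegral.intervalIntegrable_rpow (Or.inr (notMem_uIcc_of_lt ht₀pos hhalf))).const_mul _
        have hmono := intervalIntegral.integral_mono_on hcase.le hGint (hFint _ _) hGle
        refine le_trans ?_ hmono
        rw [intervalIntegral.integral_const_mul,
          integral_rpow (Or.inr ⟨by intro hcc; nlinarith [hβ],
            notMem_uIcc_of_lt ht₀pos hhalf⟩),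
          show -β - 1 + 1 = -β by ring]
        have hβne : (β:ℝ) ≠ 0 := hβ.ne'
        have e : -K' * (((t / 2) ^ (-β) - t₀ ^ (-β)) / (-β))
            = (c * (t / 2) ^ (-α) / Real.Gamma (1 - α)) * ((t / 2) ^ (-β) - t₀ ^ (-β)) := by
          rw [hK'def]; field_simp
        rw [e]
        have hX : (0:ℝ) ≤ (t / 2) ^ (-β) := Real.rpow_nonneg hhalf.le _
        have hD : (0:ℝ) ≤ c * (t / 2) ^ (-α) / Real.Gamma (1 - α) := by
          have := Real.rpow_nonneg hhalf.le (-α); positivity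
        have hDX : (0:ℝ) ≤ (c * (t / 2) ^ (-α) / Real.Gamma (1 - α)) * (t / 2) ^ (-β) :=
          mul_nonneg hD hX
        have hDY : c * t₀ ^ (-β) * ((t / 2) ^ (-α) / Real.Gamma (1 - α))
            = u₀ * ((t / 2) ^ (-α) / Real.Gamma (1 - α)) := by rw [hct₀]
        ring_nf at hDX hDY ⊢
        linarith
      -- key quantitative identities
      have hq : ∀ r : ℝ, (t / 2) ^ (-r) = t ^ (-r) * 2 ^ r := by
        intro r
        rw [div_eq_mul_inv, Real.mul_rpow htpos.le (by norm_num : (0:ℝ) ≤ 2⁻¹),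
          Real.inv_rpow (by norm_num : (0:ℝ) ≤ 2), Real.rpow_neg (by norm_num : (0:ℝ) ≤ 2),
          inv_inv]
      have hle1 : t₀ ^ β * t ^ (-β) ≤ 1 := by
        have h1 : t₀ ^ β ≤ t ^ β := Real.rpow_le_rpow ht₀pos.le h.le hβ.le
        have h2 : t ^ β * t ^ (-β) = 1 := by
          rw [← Real.rpow_add htpos, add_neg_cancel, Real.rpow_zero]
        nlinarith [Real.rpow_nonneg htpos.le (-β)]
      have hwt : ν * w t ^ γ = ν * u₀ ^ γ * t₀ ^ α * t ^ (-α) := by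
        rw [hwgt t h, hcdef,
          Real.mul_rpow (by positivity) (Real.rpow_nonneg htpos.le _),
          Real.mul_rpow hu₀.le (Real.rpow_nonneg ht₀pos.le _),
          ← Real.rpow_mul ht₀pos.le, ← Real.rpow_mul htpos.le, hβγ,
          show -β * γ = -α by rw [neg_mul, hβγ]]
        ring
      have h2gk : gker (1 - α) (1 / 2) = 2 ^ α / Real.Gamma (1 - α) := by
        rw [hgk]
        congr 1
        rw [one_div, Real.inv_rpow (by norm_num : (0:ℝ) ≤ 2),
          Real.rpow_neg (by norm_num : (0:ℝ) ≤ 2), inv_inv]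
      have hu : u₀ ^ γ * u₀ ^ (1 - γ) = u₀ := by
        rw [← Real.rpow_add hu₀]; norm_num
      have hC : ν * u₀ ^ γ * t₀ ^ α
          = u₀ * (2 ^ α / Real.Gamma (1 - α) + β * 2 ^ (α + β) / Real.Gamma (2 - α)) := by
        rw [ht₀, h2gk,
          show ν * u₀ ^ γ * (u₀ ^ (1 - γ) / ν *
              (2 ^ α / Real.Gamma (1 - α) + β * 2 ^ (α + β) / Real.Gamma (2 - α)))
            = (u₀ ^ γ * u₀ ^ (1 - γ)) *
              (2 ^ α / Real.Gamma (1 - α) + β * 2 ^ (α + β) / Real.Gamma (2 - α)) * (ν / ν)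
            by ring,
          div_self hν.ne', mul_one, hu]
      -- final comparison
      have hfinal : u₀ * (t / 2) ^ (-α) / Real.Gamma (1 - α) + B₂ ≤ ν * w t ^ γ := by
        have hrhs : ν * w t ^ γ
            = u₀ * (2 ^ α / Real.Gamma (1 - α)) * t ^ (-α)
              + u₀ * (β * 2 ^ (α + β) / Real.Gamma (2 - α)) * t ^ (-α) := by
          rw [hwt, show ν * u₀ ^ γ * t₀ ^ α * t ^ (-α) = (ν * u₀ ^ γ * t₀ ^ α) * t ^ (-α) by ring,
            hC]
          ring
        have h1 : u₀ * (t / 2) ^ (-α) / Real.Gamma (1 - α)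
            = u₀ * (2 ^ α / Real.Gamma (1 - α)) * t ^ (-α) := by
          rw [hq α]; ring
        have hprod : (t / 2) ^ (-β - 1) * (t / 2) ^ (1 - α)
            = t ^ (-β) * t ^ (-α) * 2 ^ (α + β) := by
          rw [← Real.rpow_add hhalf, show -β - 1 + (1 - α) = -(β + α) by ring, hq (β + α),
            show -(β + α) = -β + -α by ring, Real.rpow_add htpos, add_comm β α]
        have hinv : ((1:ℝ) - α)⁻¹ * (Real.Gamma (1 - α))⁻¹ = (Real.Gamma (2 - α))⁻¹ := by
          rw [hΓ21, mul_inv]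
        have e2 : B₂ = β * c * 2 ^ (α + β) * (t ^ (-β) * t ^ (-α)) / Real.Gamma (2 - α) := by
          rw [hB₂def]
          linear_combination (β * c * (1 - α)⁻¹ * (Real.Gamma (1 - α))⁻¹) * hprod
            + (β * c * (t ^ (-β) * t ^ (-α) * 2 ^ (α + β))) * hinv
        have hB₂le : B₂ ≤ u₀ * (β * 2 ^ (α + β) / Real.Gamma (2 - α)) * t ^ (-α) := by
          rw [e2, hcdef]
          have h2nn : (0:ℝ) ≤ (2:ℝ) ^ (α + β) := Real.rpow_nonneg (by norm_num) _
          have htnn : (0:ℝ) ≤ t ^ (-α) := Real.rpow_nonneg htpos.le _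
          have hP : (0:ℝ) ≤ β * u₀ * 2 ^ (α + β) * t ^ (-α) / Real.Gamma (2 - α) := by
            positivity
          have hh := mul_le_mul_of_nonneg_left hle1 hP
          ring_nf at hh ⊢
          linarith
        rw [hrhs, h1]
        linarith [hB₂le]
      -- put the pieces together
      rcases le_or_gt (t / 2) t₀ with hc2 | hc2
      · have hsplit : ∫ τ in (0:ℝ)..t, F τ
            = (∫ τ in (0:ℝ)..t₀, F τ) + ∫ τ in t₀..t, F τ :=
          (intervalIntegral.integral_add_adjacent_intervals (hFint 0 t₀) (hFint t₀ t)).symm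
        have ht1 := htail t₀ le_rfl hc2 h
        have hB1nn : (0:ℝ) ≤ u₀ * (t / 2) ^ (-α) / Real.Gamma (1 - α) := by
          have := Real.rpow_nonneg hhalf.le (-α); positivity
        rw [hconv, hsplit, h0, zero_add]
        linarith [hfinal]
      · have hs1 : ∫ τ in (0:ℝ)..(t / 2), F τ
            = (∫ τ in (0:ℝ)..t₀, F τ) + ∫ τ in t₀..(t / 2), F τ :=
          (intervalIntegral.integral_add_adjacent_intervals (hFint 0 t₀)
            (hFint t₀ (t / 2))).symm
        have hs2 : ∫ τ in (0:ℝ)..t, F τ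
            = (∫ τ in (0:ℝ)..(t / 2), F τ) + ∫ τ in (t / 2)..t, F τ :=
          (intervalIntegral.integral_add_adjacent_intervals (hFint 0 (t / 2))
            (hFint (t / 2) t)).symm
        have ht1 := htail (t / 2) hc2.le le_rfl (by linarith)
        have ht2 := hmid hc2
        rw [hconv, hs2, hs1, h0, zero_add]
        linarith [hfinal]
  exact ⟨hw0, hanti, hwpos, w', hIntOn, hFTC, ae_of_all _ hmain⟩
end
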